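/- Let S have a probability density symmetric about μ̃ ∈ ℝ₊, i.e., its cdf F satisfies F(μ̃ − x) = 1 − F(μ̃ + x) for all x. Let P be strictly convex with P' having a continuous inverse. If [t(ω'), t(ω') + Δ] is the optimal window for weight ω = ω' (i.e., (t(ω'), Δ) solves the first-order conditions for ω'), then the optimal window for ω = 1 − ω' is [t(1−ω'), t(1−ω') + Δ] with the same width Δ, where t(1−ω') satisfies t(ω') − μ̃ + Δ = −(t(1−ω') − μ̃). -/
import Mathlib

/-- Symmetry lemma: if the density of S is symmetric about μ̃ and [t(ω'), t(ω') + Δ]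
is the optimal window for weight ω', then the optimal window for weight 1 - ω' is
[t(1-ω'), t(1-ω') + Δ] with the same width, where t(ω') - μ̃ + Δ = -(t(1-ω') - μ̃). -/
theorem stmt5
    (F : ℝ → ℝ) (μ : ℝ) (hμ : 0 ≤ μ)
    (hsym : ∀ x, F (μ - x) = 1 - F (μ + x))
    (P g ginv : ℝ → ℝ)
    (hP : StrictConvexOn ℝ (Set.Ici 0) P)
    (hg : ∀ x, HasDerivAt P (g x) x)
    (hginv_cont : Continuous ginv)
    (hgl : Function.LeftInverse ginv g)
    (ω' : ℝ) (hω : ω' ∈ Set.Ioo (0:ℝ) 1)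
    (t Δ : ℝ)
    (h1 : (1 - ω') * F t = ω' * (1 - F (t + Δ)))
    (h2 : ω' * (1 - F (t + Δ)) = g Δ) :
    ∀ t' : ℝ, t - μ + Δ = -(t' - μ) →
      (1 - (1 - ω')) * F t' = (1 - ω') * (1 - F (t' + Δ)) ∧
      (1 - ω') * (1 - F (t' + Δ)) = g Δ := by
  intro t' ht'
  have e1 : F t' = 1 - F (t + Δ) := by
    have : t' = μ - (t + Δ - μ) := by linarith
    rw [this, hsym]
    ring_nf
  have e2 : F (t' + Δ) = 1 - F t := by
    have : t' + Δ = μ - (t - μ) := by linarith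
    rw [this, hsym]
    ring_nf
  constructor
  · rw [e1, e2]; ring_nf; linarith [h1]
  · rw [e2]; ring_nf; linarith [h1, h2]
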